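/- arXiv:1512.04974 — 6 statements merged into one kernel-verified Lean document; each statement's English description precedes it below -/
import Mathlib

section
/- The multideviation seed functions are orthogonal and closed under the natural inner product: for σ, ρ ⊆ B and tuples x, z, ∑_{y ∈ ∏_{i∈B} A_i} q^σ(x_σ, y_σ) · q^ρ(y_ρ, z_ρ) = δ_{σ=ρ} · q^σ(x_σ, z_σ). -/
open Finset

/-- Multideviation seed function `q^σ(x,y)`. -/
noncomputable def msf {B : Type*} [Fintype B] [DecidableEq B] (A : B → Type*) [∀ i, Fintype (A i)]
    [∀ i, DecidableEq (A i)] (σ : Finset B) (x y : ∀ i, A i) : ℝ :=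
  (1 / ∏ i : B, (Fintype.card (A i) : ℝ)) *
    ∏ i ∈ σ, ((Fintype.card (A i) : ℝ) * (if x i = y i then 1 else 0) - 1)

/-- σ-multideviation of a function `f`. -/
noncomputable def mdev {B : Type*} [Fintype B] [DecidableEq B] (A : B → Type*) [∀ i, Fintype (A i)]
    [∀ i, DecidableEq (A i)] (σ : Finset B) (f : (∀ i, A i) → ℝ) (x : ∀ i, A i) : ℝ :=
  ∑ y : ∀ i, A i, f y * msf A σ x y

theorem msf_orthogonal {B : Type*} [Fintype B] [DecidableEq B]
    (A : B → Type*) [∀ i, Fintype (A i)] [∀ i, DecidableEq (A i)] [∀ i, Nonempty (A i)]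
    (σ ρ : Finset B) (x z : ∀ i, A i) :
    ∑ y : ∀ i, A i, msf A σ x y * msf A ρ y z =
      (if σ = ρ then (1 : ℝ) else 0) * msf A σ x z := by
  classical
  set n : B → ℝ := fun i => (Fintype.card (A i) : ℝ) with hn
  have hnpos : ∀ i, 0 < n i := fun i => by
    simpa [hn] using Fintype.card_pos (α := A i)
  set N : ℝ := ∏ i : B, n i with hN
  have hNpos : 0 < N := Finset.prod_pos fun i _ => hnpos i
  -- per-coordinate factor
  set F : ∀ i : B, A i → ℝ := fun i a =>
    (if i ∈ σ then n i * (if x i = a then 1 else 0) - 1 else 1) *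
    (if i ∈ ρ then n i * (if a = z i then 1 else 0) - 1 else 1) with hF
  have key : ∑ y : ∀ i, A i, msf A σ x y * msf A ρ y z
      = (1/N) * (1/N) * ∏ i : B, ∑ a : A i, F i a := by
    rw [Fintype.prod_sum F]
    simp only [msf, ← hn, ← hN, Finset.mul_sum]
    refine Finset.sum_congr rfl fun y _ => ?_
    have h1 : (∏ i ∈ σ, (n i * (if x i = y i then 1 else 0) - 1)) *
        (∏ i ∈ ρ, (n i * (if y i = z i then 1 else 0) - 1)) = ∏ i : B, F i (y i) := by
      simp only [hF]
      rw [Finset.prod_mul_distrib]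
      congr 1
      · rw [Finset.prod_ite_mem Finset.univ σ, Finset.univ_inter]
      · rw [Finset.prod_ite_mem Finset.univ ρ, Finset.univ_inter]
    rw [← h1]; ring
  rw [key]
  -- compute the per-coordinate sums
  have hS : ∀ i : B, ∑ a : A i, F i a =
      if i ∈ σ then (if i ∈ ρ then n i * (n i * (if x i = z i then 1 else 0) - 1) else 0)
      else (if i ∈ ρ then 0 else n i) := by
    intro i
    by_cases hσ : i ∈ σ <;> by_cases hρ : i ∈ ρ <;>
      simp only [hF, hσ, hρ, if_true, if_false, mul_one, one_mul]
    · -- both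
      have : ∀ a : A i, (n i * (if x i = a then 1 else 0) - 1) * (n i * (if a = z i then 1 else 0) - 1)
          = n i * n i * ((if x i = a then 1 else 0) * (if a = z i then 1 else 0))
            - n i * (if x i = a then 1 else 0) - n i * (if a = z i then 1 else 0) + 1 := by
        intro a; ring
      simp only [this]
      rw [Finset.sum_add_distrib, Finset.sum_sub_distrib, Finset.sum_sub_distrib,
        ← Finset.mul_sum, ← Finset.mul_sum, ← Finset.mul_sum]
      have e1 : ∑ a : A i, (if x i = a then (1:ℝ) else 0) * (if a = z i then 1 else 0)
          = (if x i = z i then 1 else 0) := by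
        simp [ite_and, Finset.sum_ite_eq]
      have e2 : ∑ a : A i, (if x i = a then (1:ℝ) else 0) = 1 := by simp
      have e3 : ∑ a : A i, (if a = z i then (1:ℝ) else 0) = 1 := by simp
      rw [e1, e2, e3]
      simp only [hn, Finset.sum_const, Finset.card_univ, nsmul_eq_mul, mul_one]
      split <;> ring
    · have e2 : ∑ a : A i, (if x i = a then (1:ℝ) else 0) = 1 := by simp
      rw [Finset.sum_sub_distrib, ← Finset.mul_sum, e2]
      simp [hn]
    · have e3 : ∑ a : A i, (if a = z i then (1:ℝ) else 0) = 1 := by simp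
      rw [Finset.sum_sub_distrib, ← Finset.mul_sum, e3]
      simp [hn]
    · simp [hn]
  simp only [hS]
  by_cases h : σ = ρ
  · subst h
    rw [if_pos rfl, one_mul]
    have hsplit : (∏ i : B, if i ∈ σ then (if i ∈ σ then n i * (n i * (if x i = z i then 1 else 0) - 1) else 0) else (if i ∈ σ then 0 else n i))
        = ((∏ i ∈ σ, n i) * ∏ i ∈ σ, (n i * (if x i = z i then 1 else 0) - 1)) * ∏ i ∈ σᶜ, n i := by
      rw [← Finset.prod_mul_prod_compl σ, ← Finset.prod_mul_distrib]
      congr 1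
      · exact Finset.prod_congr rfl fun i hi => by simp [hi]
      · exact Finset.prod_congr rfl fun i hi => by simp [Finset.mem_compl.mp hi]
    rw [hsplit]
    have hNsplit : ((∏ i ∈ σ, n i) * ∏ i ∈ σᶜ, n i) = N := Finset.prod_mul_prod_compl σ n
    have hrhs : msf A σ x z = 1 / N * ∏ i ∈ σ, (n i * (if x i = z i then 1 else 0) - 1) := rfl
    rw [hrhs]
    have hN0 : N ≠ 0 := ne_of_gt hNpos
    field_simp
    rw [← hNsplit]
    ring
  · -- σ ≠ ρ : some index in symmetric difference
    rw [if_neg h, zero_mul]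
    obtain ⟨i, hi⟩ := Finset.symmDiff_nonempty.mpr h
    rw [Finset.mem_symmDiff] at hi
    have : ∏ j : B, (if j ∈ σ then (if j ∈ ρ then n j * (n j * (if x j = z j then 1 else 0) - 1) else 0)
        else (if j ∈ ρ then 0 else n j)) = 0 := by
      apply Finset.prod_eq_zero (Finset.mem_univ i)
      rcases hi with ⟨h1, h2⟩ | ⟨h1, h2⟩ <;> simp [h1, h2]
    rw [this, mul_zero]
end

section
/- Any real-valued function f on ∏_{i∈B} A_i is uniquely decomposed by its multideviations: f(x) = ∑_{σ ⊆ B} Q^σ_f(x_σ), where Q^σ_f(x_σ) = ∑_{y} f(y) q^σ(x_σ, y_σ). -/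
open Finset

theorem multideviation_decomposition {B : Type*} [Fintype B] [DecidableEq B]
    (A : B → Type*) [∀ i, Fintype (A i)] [∀ i, DecidableEq (A i)] [∀ i, Nonempty (A i)]
    (f : (∀ i, A i) → ℝ) (x : ∀ i, A i) :
    f x = ∑ σ : Finset B, mdev A σ f x := by
  have hcard : (∏ i : B, (Fintype.card (A i) : ℝ)) ≠ 0 := by
    apply Finset.prod_ne_zero_iff.mpr
    intro i _
    exact_mod_cast (Fintype.card_pos (α := A i)).ne'
  have key : ∀ y : ∀ i, A i,
      ∑ σ : Finset B, msf A σ x y = if y = x then 1 else 0 := by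
    intro y
    unfold msf
    rw [← Finset.mul_sum]
    have hsum : ∑ σ : Finset B,
        ∏ i ∈ σ, ((Fintype.card (A i) : ℝ) * (if x i = y i then 1 else 0) - 1)
        = ∏ i : B, ((Fintype.card (A i) : ℝ) * (if x i = y i then 1 else 0)) := by
      have := Finset.prod_add
        (fun i => (Fintype.card (A i) : ℝ) * (if x i = y i then 1 else 0) - 1)
        (fun _ => (1 : ℝ)) Finset.univ
      simp only [sub_add_cancel, Finset.prod_const_one, mul_one] at this
      rw [this, ← Finset.powerset_univ]
    rw [hsum]
    by_cases h : y = x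
    · subst h
      simp [one_div, inv_mul_cancel₀ hcard]
    · have : ∃ i, x i ≠ y i := by
        by_contra hc
        push_neg at hc
        exact h (funext fun i => (hc i).symm)
      obtain ⟨i, hi⟩ := this
      rw [if_neg h]
      have hz : ∏ j : B, ((Fintype.card (A j) : ℝ) * (if x j = y j then 1 else 0)) = 0 :=
        Finset.prod_eq_zero (Finset.mem_univ i) (by rw [if_neg hi, mul_zero])
      rw [hz, mul_zero]
  calc f x = ∑ y : ∀ i, A i, f y * (if y = x then 1 else 0) := by simp
    _ = ∑ y : ∀ i, A i, f y * ∑ σ : Finset B, msf A σ x y := by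
        simp_rw [key]
    _ = ∑ σ : Finset B, mdev A σ f x := by
        unfold mdev
        rw [Finset.sum_comm]
        simp_rw [Finset.mul_sum]
end

section
/- Multideviations are picked out by contraction with a seed function: for any f : ∏ A_i → ℝ and σ, μ ⊆ B, ∑_{x ∈ ∏ A_i} Q^σ_f(x_σ) · q^μ(x_μ, y_μ) = δ_{σ=μ} · Q^σ_f(y_σ). -/
open Finset

lemma msf_symm {B : Type*} [Fintype B] [DecidableEq B] (A : B → Type*) [∀ i, Fintype (A i)]
    [∀ i, DecidableEq (A i)] (σ : Finset B) (x y : ∀ i, A i) :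
    msf A σ x y = msf A σ y x := by
  unfold msf
  congr 1
  refine Finset.prod_congr rfl fun i _ => ?_
  simp [eq_comm]

lemma sum_g {α : Type*} [Fintype α] [DecidableEq α] (c : α) :
    ∑ a : α, ((Fintype.card α : ℝ) * (if a = c then 1 else 0) - 1) = 0 := by
  simp [Finset.sum_sub_distrib, Finset.mul_sum, Finset.card_univ]

lemma sum_gh {α : Type*} [Fintype α] [DecidableEq α] (c d : α) :
    ∑ a : α, ((Fintype.card α : ℝ) * (if a = c then 1 else 0) - 1) *
      ((Fintype.card α : ℝ) * (if a = d then 1 else 0) - 1) =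
    (Fintype.card α : ℝ) * ((Fintype.card α : ℝ) * (if c = d then 1 else 0) - 1) := by
  have h : ∀ a : α, ((Fintype.card α : ℝ) * (if a = c then 1 else 0) - 1) *
      ((Fintype.card α : ℝ) * (if a = d then 1 else 0) - 1) =
      (Fintype.card α : ℝ)^2 * ((if a = c then 1 else 0) * (if a = d then 1 else 0))
        - (Fintype.card α : ℝ) * (if a = c then 1 else 0)
        - (Fintype.card α : ℝ) * (if a = d then 1 else 0) + 1 := by
    intro a; ring
  rw [Finset.sum_congr rfl fun a _ => h a]
  have key : ∑ a : α, ((if a = c then (1:ℝ) else 0) * (if a = d then 1 else 0)) =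
      if c = d then 1 else 0 := by
    rw [Finset.sum_congr rfl (g := fun a => if a = c then (if c = d then (1:ℝ) else 0) else 0)
      (fun a _ => by by_cases h1 : a = c <;> simp [h1])]
    simp
  simp only [Finset.sum_add_distrib, Finset.sum_sub_distrib, ← Finset.mul_sum, key]
  by_cases hcd : c = d <;> simp [hcd, Finset.card_univ] <;> ring

lemma msf_orth {B : Type*} [Fintype B] [DecidableEq B]
    (A : B → Type*) [∀ i, Fintype (A i)] [∀ i, DecidableEq (A i)] [∀ i, Nonempty (A i)]
    (σ μ : Finset B) (w y : ∀ i, A i) :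
    ∑ x : ∀ i, A i, msf A σ x w * msf A μ x y =
      (if σ = μ then (1 : ℝ) else 0) * msf A σ w y := by
  classical
  set n : B → ℝ := fun i => (Fintype.card (A i) : ℝ) with hn
  have hnpos : ∀ i, 0 < n i := fun i => by
    simpa [hn] using (Nat.cast_pos.2 (Fintype.card_pos (α := A i)) : (0:ℝ) < _)
  set N : ℝ := ∏ i : B, n i with hN
  have hNpos : 0 < N := Finset.prod_pos fun i _ => hnpos i
  have key : ∀ x : ∀ i, A i, msf A σ x w * msf A μ x y =
      (1/N)^2 * ∏ i : B,
        ((if i ∈ σ then n i * (if x i = w i then 1 else 0) - 1 else 1) *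
         (if i ∈ μ then n i * (if x i = y i then 1 else 0) - 1 else 1)) := by
    intro x
    unfold msf
    rw [Finset.prod_mul_distrib]
    rw [Finset.prod_ite_mem, Finset.prod_ite_mem, Finset.univ_inter, Finset.univ_inter]
    ring
  rw [Finset.sum_congr rfl fun x _ => key x, ← Finset.mul_sum]
  have hps := Fintype.prod_sum (fun i (a : A i) =>
    (if i ∈ σ then n i * (if a = w i then 1 else 0) - 1 else 1) *
    (if i ∈ μ then n i * (if a = y i then 1 else 0) - 1 else 1))
  rw [← hps]
  have factor : ∀ i : B, ∑ a : A i,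
      ((if i ∈ σ then n i * (if a = w i then 1 else 0) - 1 else 1) *
       (if i ∈ μ then n i * (if a = y i then 1 else 0) - 1 else 1)) =
      if i ∈ σ then (if i ∈ μ then n i * (n i * (if w i = y i then 1 else 0) - 1) else 0)
      else (if i ∈ μ then 0 else n i) := by
    intro i
    by_cases hσ : i ∈ σ <;> by_cases hμ : i ∈ μ
    · simp only [if_pos hσ, if_pos hμ]; exact sum_gh (w i) (y i)
    · simp only [if_pos hσ, if_neg hμ, mul_one]; exact sum_g (w i)
    · simp only [if_neg hσ, if_pos hμ, one_mul]; exact sum_g (y i)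
    · simp [if_neg hσ, if_neg hμ, hn, Finset.card_univ]
  rw [Finset.prod_congr rfl fun i _ => factor i]
  by_cases hσμ : σ = μ
  · subst hσμ
    have : ∏ i : B, (if i ∈ σ then (if i ∈ σ then n i * (n i * (if w i = y i then 1 else 0) - 1) else 0)
        else (if i ∈ σ then 0 else n i)) =
        N * ∏ i ∈ σ, (n i * (if w i = y i then 1 else 0) - 1) := by
      have : ∀ i : B, (if i ∈ σ then (if i ∈ σ then n i * (n i * (if w i = y i then 1 else 0) - 1) else 0)
          else (if i ∈ σ then 0 else n i)) =
          n i * (if i ∈ σ then (n i * (if w i = y i then 1 else 0) - 1) else 1) := by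
        intro i; by_cases h : i ∈ σ <;> simp [h]
      rw [Finset.prod_congr rfl fun i _ => this i, Finset.prod_mul_distrib,
        Finset.prod_ite_mem, Finset.univ_inter, hN]
    rw [this]
    unfold msf
    rw [if_pos rfl]
    field_simp
    ring
  · rw [if_neg hσμ, zero_mul]
    have : ∃ i : B, (i ∈ σ ∧ i ∉ μ) ∨ (i ∈ μ ∧ i ∉ σ) := by
      by_contra h
      push_neg at h
      apply hσμ
      ext i
      have := h i
      tauto
    obtain ⟨i, hi⟩ := this
    have : (∏ i : B, (if i ∈ σ then (if i ∈ μ then n i * (n i * (if w i = y i then 1 else 0) - 1) else 0)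
        else (if i ∈ μ then 0 else n i))) = 0 := by
      apply Finset.prod_eq_zero (Finset.mem_univ i)
      rcases hi with ⟨h1, h2⟩ | ⟨h1, h2⟩ <;> simp [h1, h2]
    rw [this, mul_zero]

theorem multideviation_orthogonality {B : Type*} [Fintype B] [DecidableEq B]
    (A : B → Type*) [∀ i, Fintype (A i)] [∀ i, DecidableEq (A i)] [∀ i, Nonempty (A i)]
    (f : (∀ i, A i) → ℝ) (σ μ : Finset B) (y : ∀ i, A i) :
    ∑ x : ∀ i, A i, mdev A σ f x * msf A μ x y =
      (if σ = μ then (1 : ℝ) else 0) * mdev A σ f y := by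
  classical
  unfold mdev
  simp only [Finset.sum_mul, mul_assoc]
  rw [Finset.sum_comm]
  rw [Finset.sum_congr rfl fun w _ => by rw [← Finset.mul_sum, msf_orth A σ μ w y]]
  rw [Finset.mul_sum]
  refine Finset.sum_congr rfl fun w _ => ?_
  rw [msf_symm A σ w y]
  ring
end

section
/- Nonnegativity of a probability distribution translates into multideviation inequalities: for every x ∈ ∏ A_i, ∑_{σ ⊆ B} Q^σ_P(x_σ) ≥ 0. -/
open Finset

theorem multideviation_nonneg_sum {B : Type*} [Fintype B] [DecidableEq B]
    (A : B → Type*) [∀ i, Fintype (A i)] [∀ i, DecidableEq (A i)] [∀ i, Nonempty (A i)]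
    (Pr : (∀ i, A i) → ℝ) (hpos : ∀ x, 0 ≤ Pr x) (hsum : ∑ x : ∀ i, A i, Pr x = 1)
    (x : ∀ i, A i) :
    0 ≤ ∑ σ : Finset B, mdev A σ Pr x := by
  have hN : (∏ i : B, (Fintype.card (A i) : ℝ)) ≠ 0 := by
    refine Finset.prod_ne_zero_iff.2 fun i _ => ?_
    exact Nat.cast_ne_zero.2 Fintype.card_ne_zero
  have key : ∑ σ : Finset B, mdev A σ Pr x = Pr x := by
    unfold mdev msf
    rw [Finset.sum_comm]
    have h1 : ∀ y : ∀ i, A i,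
        (∑ σ : Finset B, Pr y * ((1 / ∏ i : B, (Fintype.card (A i) : ℝ)) *
          ∏ i ∈ σ, ((Fintype.card (A i) : ℝ) * (if x i = y i then 1 else 0) - 1)))
        = if y = x then Pr y else 0 := by
      intro y
      rw [← Finset.mul_sum, ← Finset.mul_sum]
      have hps : ∑ σ : Finset B, ∏ i ∈ σ, ((Fintype.card (A i) : ℝ) * (if x i = y i then 1 else 0) - 1)
          = ∏ i : B, ((Fintype.card (A i) : ℝ) * (if x i = y i then 1 else 0)) := by
        have := Finset.prod_add
          (fun i => (Fintype.card (A i) : ℝ) * (if x i = y i then 1 else 0) - 1)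
          (fun _ => (1:ℝ)) (Finset.univ : Finset B)
        simp only [Finset.prod_const_one, mul_one, sub_add_cancel] at this
        rw [this, ← Finset.powerset_univ]
      rw [hps]
      by_cases h : y = x
      · subst h
        simp [hN]
      · have : ∃ i, x i ≠ y i := by
          by_contra hc
          push_neg at hc
          exact h (funext fun i => (hc i).symm)
        obtain ⟨i, hi⟩ := this
        have hz : (∏ i : B, ((Fintype.card (A i) : ℝ) * (if x i = y i then 1 else 0))) = 0 :=
          Finset.prod_eq_zero (Finset.mem_univ i) (by rw [if_neg hi, mul_zero])
        rw [hz]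
        simp [h]
    rw [Finset.sum_congr rfl fun y _ => h1 y]
    simp
  rw [key]
  exact hpos x
end

section
/- In the binary case, if Q^σ attains its maximum value Q^∅ = 1/2^{|B|}, then Q^ρ = Q^{σ Δ ρ} for every ρ ⊆ B (where Δ is symmetric difference); if Q^σ attains its minimum −Q^∅, then Q^ρ = −Q^{σ Δ ρ} for every ρ ⊆ B. -/
open Finset

/-- In the binary case (all outcome sets `Fin 2`, with `0` representing outcome 1 and
`1` representing outcome 2), the σ-multideviation of `P` at the all-ones tuple. -/
noncomputable def binQ {B : Type*} [Fintype B] [DecidableEq B]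
    (Pr : (B → Fin 2) → ℝ) (σ : Finset B) : ℝ :=
  ∑ y : B → Fin 2, Pr y * ((1 / (2 : ℝ) ^ Fintype.card B) *
    ∏ i ∈ σ, (2 * (if y i = 0 then (1 : ℝ) else 0) - 1))

lemma prod_symmDiff_pm {B : Type*} [DecidableEq B] (f : B → ℝ)
    (hf : ∀ i, f i = 1 ∨ f i = -1) (σ ρ : Finset B) :
    ∏ i ∈ symmDiff σ ρ, f i = (∏ i ∈ σ, f i) * ∏ i ∈ ρ, f i := by
  have hsq : (∏ i ∈ σ ∩ ρ, f i) * ∏ i ∈ σ ∩ ρ, f i = 1 := by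
    rw [← Finset.prod_mul_distrib]
    exact Finset.prod_eq_one fun i _ => by rcases hf i with h | h <;> rw [h] <;> ring
  have h1 : (∏ i ∈ σ \ ρ, f i) * ∏ i ∈ σ ∩ ρ, f i = ∏ i ∈ σ, f i := by
    rw [← Finset.sdiff_inter_self_left σ ρ]
    exact Finset.prod_sdiff Finset.inter_subset_left
  have h2 : (∏ i ∈ ρ \ σ, f i) * ∏ i ∈ σ ∩ ρ, f i = ∏ i ∈ ρ, f i := by
    rw [show ρ \ σ = ρ \ (σ ∩ ρ) by rw [Finset.inter_comm, Finset.sdiff_inter_self_left]]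
    exact Finset.prod_sdiff Finset.inter_subset_right
  have hsd : symmDiff σ ρ = (σ \ ρ) ∪ (ρ \ σ) := rfl
  rw [hsd, Finset.prod_union disjoint_sdiff_sdiff, ← h1, ← h2]
  linear_combination (-((∏ i ∈ σ \ ρ, f i) * ∏ i ∈ ρ \ σ, f i)) * hsq

theorem binary_multideviation_extremes {B : Type*} [Fintype B] [DecidableEq B]
    (Pr : (B → Fin 2) → ℝ) (hpos : ∀ x, 0 ≤ Pr x) (hsum : ∑ x : B → Fin 2, Pr x = 1)
    (σ : Finset B) :
    (binQ Pr σ = 1 / (2 : ℝ) ^ Fintype.card B →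
      ∀ ρ : Finset B, binQ Pr ρ = binQ Pr (symmDiff σ ρ)) ∧
    (binQ Pr σ = -(1 / (2 : ℝ) ^ Fintype.card B) →
      ∀ ρ : Finset B, binQ Pr ρ = -binQ Pr (symmDiff σ ρ)) := by
  set c : ℝ := 1 / (2 : ℝ) ^ Fintype.card B with hc
  have hcpos : 0 < c := by positivity
  set g : (B → Fin 2) → Finset B → ℝ :=
    fun y τ => ∏ i ∈ τ, (2 * (if y i = 0 then (1 : ℝ) else 0) - 1) with hg
  have hfac : ∀ (y : B → Fin 2) i,
      (2 * (if y i = 0 then (1 : ℝ) else 0) - 1) = 1 ∨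
      (2 * (if y i = 0 then (1 : ℝ) else 0) - 1) = -1 := by
    intro y i; by_cases h : y i = 0 <;> simp [h] <;> norm_num
  have hgpm : ∀ y τ, g y τ = 1 ∨ g y τ = -1 := by
    intro y τ
    simp only [hg]
    induction τ using Finset.induction with
    | empty => left; simp
    | insert _ _ h ih =>
      rename_i a s
      rw [Finset.prod_insert h]
      rcases hfac y a with h1 | h1 <;> rcases ih with h2 | h2 <;>
        rw [h1, h2] <;> simp
  have hbq : ∀ τ, binQ Pr τ = ∑ y : B → Fin 2, Pr y * (c * g y τ) := fun τ => rfl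
  have hgsd : ∀ y ρ, g y (symmDiff σ ρ) = g y σ * g y ρ := fun y ρ =>
    prod_symmDiff_pm _ (hfac y) σ ρ
  constructor
  · intro hmax ρ
    have hkey : ∀ y : B → Fin 2, Pr y * g y σ = Pr y := by
      have hsum' : ∑ y : B → Fin 2, Pr y * g y σ = ∑ y : B → Fin 2, Pr y := by
        rw [hbq σ] at hmax
        have h0 : ∑ y : B → Fin 2, Pr y * (c * g y σ) = c * ∑ y : B → Fin 2, Pr y * g y σ := by
          rw [Finset.mul_sum]
          exact Finset.sum_congr rfl fun y _ => by ring
        have h1 : c * ∑ y : B → Fin 2, Pr y * g y σ = c * 1 := by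
          rw [mul_one]; exact (h0.symm.trans hmax)
        rw [hsum]
        exact mul_left_cancel₀ (ne_of_gt hcpos) h1
      have hle : ∀ y ∈ (Finset.univ : Finset (B → Fin 2)), Pr y * g y σ ≤ Pr y := by
        intro y _
        rcases hgpm y σ with h | h <;> rw [h] <;> nlinarith [hpos y]
      intro y
      exact (Finset.sum_eq_sum_iff_of_le hle).mp hsum' y (Finset.mem_univ y)
    rw [hbq ρ, hbq (symmDiff σ ρ)]
    refine Finset.sum_congr rfl fun y _ => ?_
    rw [hgsd y ρ]
    linear_combination (-(c * g y ρ)) * (hkey y)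
  · intro hmin ρ
    have hkey : ∀ y : B → Fin 2, Pr y * g y σ = -Pr y := by
      have hsum' : ∑ y : B → Fin 2, -Pr y = ∑ y : B → Fin 2, Pr y * g y σ := by
        rw [hbq σ] at hmin
        have h1 : c * ∑ y : B → Fin 2, Pr y * g y σ = c * (-1) := by
          rw [Finset.mul_sum]
          rw [show c * (-1) = -c by ring, ← hmin]
          exact Finset.sum_congr rfl fun y _ => by ring
        have h2 : ∑ y : B → Fin 2, Pr y * g y σ = -1 :=
          mul_left_cancel₀ (ne_of_gt hcpos) h1
        have h3 : ∑ y : B → Fin 2, -Pr y = -1 := by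
          rw [Finset.sum_neg_distrib, hsum]
        rw [h2, h3]
      have hle : ∀ y ∈ (Finset.univ : Finset (B → Fin 2)), -Pr y ≤ Pr y * g y σ := by
        intro y _
        rcases hgpm y σ with h | h <;> rw [h] <;> nlinarith [hpos y]
      intro y
      have := (Finset.sum_eq_sum_iff_of_le hle).mp hsum' y (Finset.mem_univ y)
      linarith [this]
    rw [hbq ρ, hbq (symmDiff σ ρ), ← Finset.sum_neg_distrib]
    refine Finset.sum_congr rfl fun y _ => ?_
    rw [hgsd y ρ]
    linear_combination (c * g y ρ) * (hkey y)
end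

section
/- The odd-out transformation is an involution: for any finite set z and any S ⊆ 𝒫(z), defining S* = { σ ⊆ z : |S ∩ 𝒫(σ)| is odd }, one has S** = S. -/
open Finset

/-- The odd-out transform of a family `S` of subsets of `z`. -/
def oddOut {z : Type*} [Fintype z] [DecidableEq z] (S : Finset (Finset z)) :
    Finset (Finset z) :=
  Finset.univ.filter (fun σ => Odd ((S.filter (fun τ => τ ⊆ σ)).card))

lemma natCast_zmod2 (n : ℕ) : (n : ZMod 2) = if Odd n then 1 else 0 := by
  rw [← ZMod.natCast_mod]
  rcases Nat.mod_two_eq_zero_or_one n with h | h <;>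
    simp [h, Nat.odd_iff, -ZMod.natCast_mod]

lemma oddOut_key {z : Type*} [Fintype z] [DecidableEq z]
    (S : Finset (Finset z)) (ρ : Finset z) :
    ((((oddOut S).filter (fun τ => τ ⊆ ρ)).card : ZMod 2)) =
      if ρ ∈ S then 1 else 0 := by
  have h1 : (((oddOut S).filter (fun τ => τ ⊆ ρ)).card : ZMod 2) =
      ∑ σ ∈ Finset.univ.filter (fun σ => σ ⊆ ρ),
        ((S.filter (fun τ => τ ⊆ σ)).card : ZMod 2) := by
    rw [oddOut, Finset.filter_filter, Finset.card_filter]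
    push_cast
    rw [Finset.sum_filter]
    refine Finset.sum_congr rfl fun σ _ => ?_
    by_cases hσ : σ ⊆ ρ <;>
      simp [hσ, natCast_zmod2, and_comm]
  rw [h1]
  have h2 : ∀ σ : Finset z, ((S.filter (fun τ => τ ⊆ σ)).card : ZMod 2) =
      ∑ τ ∈ S, if τ ⊆ σ then (1 : ZMod 2) else 0 := by
    intro σ
    rw [Finset.card_filter]; push_cast; simp
  simp_rw [h2]
  rw [Finset.sum_comm]
  have h3 : ∀ τ ∈ S,
      (∑ σ ∈ Finset.univ.filter (fun σ => σ ⊆ ρ), if τ ⊆ σ then (1 : ZMod 2) else 0)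
        = if τ = ρ then 1 else 0 := by
    intro τ _
    rw [← Finset.sum_filter, Finset.filter_filter, Finset.sum_const, nsmul_eq_mul, mul_one]
    have hIcc : Finset.univ.filter (fun σ => σ ⊆ ρ ∧ τ ⊆ σ) = Finset.Icc τ ρ := by
      ext σ; simp [Finset.mem_Icc, and_comm]
    rw [hIcc]
    by_cases hτρ : τ ⊆ ρ
    · rw [Finset.card_Icc_finset hτρ, natCast_zmod2]
      by_cases heq : τ = ρ
      · simp [heq]
      · have hlt : τ.card < ρ.card := Finset.card_lt_card (lt_of_le_of_ne hτρ heq)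
        have : Odd (2 ^ (ρ.card - τ.card)) ↔ False := by
          simp [Nat.odd_iff, Nat.two_pow_mod_two_eq_zero.mpr (by omega : 0 < ρ.card - τ.card)]
        simp [this, heq]
    · have : Finset.Icc τ ρ = ∅ := Finset.Icc_eq_empty (by simpa using hτρ)
      have hne : τ ≠ ρ := by rintro rfl; exact hτρ (le_refl _)
      simp [this, hne]
  rw [Finset.sum_congr rfl h3, Finset.sum_ite_eq' S ρ (fun _ => (1 : ZMod 2))]

theorem oddOut_involutive {z : Type*} [Fintype z] [DecidableEq z]
    (S : Finset (Finset z)) : oddOut (oddOut S) = S := by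
  ext ρ
  have := oddOut_key S ρ
  rw [oddOut, Finset.mem_filter]
  constructor
  · rintro ⟨-, hodd⟩
    rw [natCast_zmod2, if_pos hodd] at this
    by_contra h
    rw [if_neg h] at this
    exact one_ne_zero this
  · intro h
    refine ⟨Finset.mem_univ _, ?_⟩
    rw [if_pos h, natCast_zmod2] at this
    by_contra hodd
    rw [if_neg hodd] at this
    exact one_ne_zero this.symm
end
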